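/- For an n-state ergodic homogeneous Markov chain with transition matrix T, the mean first passage time from state i to state j satisfies m_ij = (l#_jj - l#_ij)/π_j for i ≠ j and m_jj = 1/π_j, where L# = [l#_ij] is the group inverse of L = I - T and π is the stationary distribution of T. -/
import Mathlib


open Finset Relation Matrix
open scoped Classical

/-- `T` is a (row-)stochastic matrix. -/
def IsStochastic {n : ℕ} (T : Matrix (Fin n) (Fin n) ℝ) : Prop :=
  (∀ i j, 0 ≤ T i j) ∧ ∀ i, ∑ j, T i j = 1

/-- Irreducibility of a Markov chain: every state leads to every state. -/
def IsIrreducibleMC {n : ℕ} (T : Matrix (Fin n) (Fin n) ℝ) : Prop :=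
  ∀ i j, Relation.TransGen (fun a b => 0 < T a b) i j

/-- `pi` is the stationary distribution of `T`. -/
def IsStationaryDist {n : ℕ} (T : Matrix (Fin n) (Fin n) ℝ) (pi : Fin n → ℝ) : Prop :=
  (∀ i, 0 ≤ pi i) ∧ (∑ i, pi i) = 1 ∧ ∀ j, ∑ i, pi i * T i j = pi j

/-- The step relation of a set `A` of arcs. -/
def arcStep {n : ℕ} (A : Finset (Fin n × Fin n)) (x y : Fin n) : Prop := (x, y) ∈ A

/-- `A` is an in-forest: no loops, out-degree at most one, and no directed cycles;
equivalently, every weak component is a converging tree. -/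
def IsInForest {n : ℕ} (A : Finset (Fin n × Fin n)) : Prop :=
  (∀ a ∈ A, a.1 ≠ a.2) ∧
  (∀ v : Fin n, (A.filter fun a => a.1 = v).card ≤ 1) ∧
  ∀ v : Fin n, ¬ Relation.TransGen (arcStep A) v v

/-- `j` is a root (no outgoing arc) of the arc set `A`. -/
def IsRootOf {n : ℕ} (A : Finset (Fin n × Fin n)) (j : Fin n) : Prop := ∀ a ∈ A, a.1 ≠ j

/-- In the in-forest `A`, vertex `i` belongs to the tree converging to the root `j`. -/
def InTreeOf {n : ℕ} (A : Finset (Fin n × Fin n)) (i j : Fin n) : Prop :=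
  IsRootOf A j ∧ Relation.ReflTransGen (arcStep A) i j

/-- The weight of an arc set: the product of its arc weights. -/
noncomputable def digraphWeight {n : ℕ} (W : Matrix (Fin n) (Fin n) ℝ)
    (A : Finset (Fin n × Fin n)) : ℝ :=
  ∏ a ∈ A, W a.1 a.2

/-- Total weight of the in-forests satisfying the predicate `P`. -/
noncomputable def forestWeight {n : ℕ} (W : Matrix (Fin n) (Fin n) ℝ)
    (P : Finset (Fin n × Fin n) → Prop) : ℝ :=
  ∑ A : Finset (Fin n × Fin n), if IsInForest A ∧ P A then digraphWeight W A else 0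

/-- `σ_k`: total weight of in-forests with `k` arcs. -/
noncomputable def sigmaF {n : ℕ} (W : Matrix (Fin n) (Fin n) ℝ) (k : ℕ) : ℝ :=
  forestWeight W fun A => A.card = k

/-- `q^(k)_{ij}`: total weight of in-forests with `k` arcs in which vertex `i`
belongs to the tree converging to `j`. -/
noncomputable def qF {n : ℕ} (W : Matrix (Fin n) (Fin n) ℝ) (k : ℕ) (i j : Fin n) : ℝ :=
  forestWeight W fun A => A.card = k ∧ InTreeOf A i j

/-- `q_j`: total weight of spanning trees converging to `j`. -/
noncomputable def treeW {n : ℕ} (W : Matrix (Fin n) (Fin n) ℝ) (j : Fin n) : ℝ :=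
  qF W (n - 1) j j

/-- `f_{ij}`: total weight of 2-tree in-forests having one tree containing `i`
and the other tree converging to `j`. -/
noncomputable def fF {n : ℕ} (W : Matrix (Fin n) (Fin n) ℝ) (i j : Fin n) : ℝ :=
  forestWeight W fun A =>
    A.card = n - 2 ∧ IsRootOf A j ∧ ¬ Relation.ReflTransGen (arcStep A) i j

/-- `X` is the group inverse of `L`. -/
def IsGroupInverse {n : ℕ} (L X : Matrix (Fin n) (Fin n) ℝ) : Prop :=
  L * X * L = L ∧ X * L * X = X ∧ L * X = X * L

/-- `M` is the matrix of mean first passage times (with `M j j` the mean return time):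
the standard first-step equations. -/
def IsMFPTMatrix {n : ℕ} (T M : Matrix (Fin n) (Fin n) ℝ) : Prop :=
  ∀ i j, M i j = 1 + ∑ k ∈ Finset.univ.filter (fun k => k ≠ j), T i k * M k j

/-- `m` is the hitting-time function with `m i i = 0`. -/
def IsHittingTime {n : ℕ} (T : Matrix (Fin n) (Fin n) ℝ) (m : Fin n → Fin n → ℝ) : Prop :=
  (∀ i, m i i = 0) ∧ ∀ i j, i ≠ j → m i j = 1 + ∑ k, T i k * m k j

/-- The Laplacian matrix of the weight matrix `W`. -/
noncomputable def lap {n : ℕ} (W : Matrix (Fin n) (Fin n) ℝ) : Matrix (Fin n) (Fin n) ℝ :=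
  Matrix.diagonal (fun i => ∑ j, W i j) - W

lemma maxp {n : ℕ} (T : Matrix (Fin n) (Fin n) ℝ)
    (hT0 : ∀ i j, 0 ≤ T i j) (hT1 : ∀ i, ∑ j, T i j = 1)
    (hirr : IsIrreducibleMC T) (v : Fin n → ℝ)
    (hv : ∀ i, v i = ∑ k, T i k * v k) (i i' : Fin n) : v i = v i' := by
  obtain ⟨i₀, -, hmax⟩ := Finset.exists_max_image Finset.univ v ⟨i, Finset.mem_univ i⟩
  have step : ∀ a b : Fin n, v a = v i₀ → 0 < T a b → v b = v i₀ := by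
    intro a b ha hab
    have hsum : ∑ k, T a k * (v i₀ - v k) = 0 := by
      simp only [mul_sub]
      rw [Finset.sum_sub_distrib, ← Finset.sum_mul, hT1, one_mul, ← hv, ha]
      ring
    have hz := (Finset.sum_eq_zero_iff_of_nonneg (fun k _ =>
      mul_nonneg (hT0 a k) (sub_nonneg.2 (hmax k (Finset.mem_univ k))))).1 hsum b (Finset.mem_univ b)
    have hvb : v i₀ - v b = 0 := by
      rcases mul_eq_zero.1 hz with h | h
      · exact absurd h (ne_of_gt hab)
      · exact h
    linarith
  have key : ∀ b, Relation.TransGen (fun a b => 0 < T a b) i₀ b → v b = v i₀ := by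
    intro b hb
    induction hb with
    | single h => exact step _ _ rfl h
    | tail _ h ih => exact step _ _ ih h
  rw [key i (hirr i₀ i), key i' (hirr i₀ i')]


/-- Meyer's formula for mean first passage times via the group inverse
of `L = I - T` and the stationary distribution. -/
theorem stmt0 {n : ℕ} (hn : 1 ≤ n) (T : Matrix (Fin n) (Fin n) ℝ)
    (hst : IsStochastic T) (hirr : IsIrreducibleMC T)
    (pi : Fin n → ℝ) (hpi : IsStationaryDist T pi)
    (X : Matrix (Fin n) (Fin n) ℝ) (hX : IsGroupInverse (1 - T) X)
    (M : Matrix (Fin n) (Fin n) ℝ) (hM : IsMFPTMatrix T M) :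
    (∀ i j, i ≠ j → M i j = (X j j - X i j) / pi j) ∧ ∀ j, M j j = 1 / pi j := by
  obtain ⟨hT0, hT1⟩ := hst
  obtain ⟨hpi0, hpi1, hpiT⟩ := hpi
  obtain ⟨hX1, hX2, hX3⟩ := hX
  -- (1-T) * (1 - X*(1-T)) = 0
  have hmz : (1 - T) * (1 - X * (1 - T)) = 0 := by
    have h : (1 - T) * (X * (1 - T)) = 1 - T := by rw [← mul_assoc, hX1]
    rw [mul_sub, mul_one, h, sub_self]
  set E := X * (1 - T) with hEdef
  -- columns of Q = 1 - X(1-T) are harmonic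
  have hQrec : ∀ b a, ((if a = b then (1:ℝ) else 0) - E a b)
      = ∑ k, T a k * ((if k = b then (1:ℝ) else 0) - E k b) := by
    intro b a
    have h0 : ((1 - T) * (1 - E)) a b = 0 := by rw [hmz]; simp
    rw [Matrix.mul_apply] at h0
    simp only [Matrix.sub_apply, Matrix.one_apply, sub_mul, ite_mul, one_mul, zero_mul,
      Finset.sum_sub_distrib, Finset.sum_ite_eq, Finset.mem_univ, if_true] at h0
    linarith
  have hpiL : ∀ k, ∑ i, pi i * ((if i = k then (1:ℝ) else 0) - T i k) = 0 := by
    intro k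
    simp only [mul_sub, Finset.sum_sub_distrib, mul_ite, mul_one, mul_zero,
      Finset.sum_ite_eq', Finset.mem_univ, if_true, hpiT, sub_self]
  have hpiE : ∀ b, ∑ i, pi i * E i b = 0 := by
    intro b
    have hE' : ∀ i, E i b = ∑ k, ((if i = k then (1:ℝ) else 0) - T i k) * X k b := by
      intro i
      rw [← hX3, Matrix.mul_apply]
      simp only [Matrix.sub_apply, Matrix.one_apply]
    simp only [hE', Finset.mul_sum]
    rw [Finset.sum_comm]
    refine Finset.sum_eq_zero fun k _ => ?_
    have h : ∑ i, pi i * (((if i = k then (1:ℝ) else 0) - T i k) * X k b)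
        = (∑ i, pi i * ((if i = k then (1:ℝ) else 0) - T i k)) * X k b := by
      rw [Finset.sum_mul]; exact Finset.sum_congr rfl fun i _ => (mul_assoc _ _ _).symm
    rw [h, hpiL k, zero_mul]
  -- X(1-T) = I - 1⊗pi
  have hEform : ∀ a b, E a b = (if a = b then (1:ℝ) else 0) - pi b := by
    intro a b
    have hconstQ := fun i => maxp T hT0 hT1 hirr
      (fun x => (if x = b then (1:ℝ) else 0) - (X * (1 - T)) x b) (hQrec b) i a
    have hsum : ∑ i, pi i * ((if i = b then (1:ℝ) else 0) - E i b) = pi b := by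
      simp only [mul_sub, Finset.sum_sub_distrib, mul_ite, mul_one, mul_zero,
        Finset.sum_ite_eq', Finset.mem_univ, if_true]
      rw [hpiE b, sub_zero]
    have hsum' : ∑ i, pi i * ((if i = b then (1:ℝ) else 0) - E i b)
        = (if a = b then (1:ℝ) else 0) - E a b := by
      calc ∑ i, pi i * ((if i = b then (1:ℝ) else 0) - E i b)
          = ∑ i, pi i * ((if a = b then (1:ℝ) else 0) - E a b) :=
            Finset.sum_congr rfl fun i _ => by rw [hconstQ i]
        _ = (∑ i, pi i) * ((if a = b then (1:ℝ) else 0) - E a b) :=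
            (Finset.sum_mul _ _ _).symm
        _ = _ := by rw [hpi1, one_mul]
    linarith [hsum, hsum']
  -- pi * X = 0
  have hpiX : ∀ b, ∑ k, pi k * X k b = 0 := by
    intro b
    set a : Fin n := ⟨0, hn⟩ with ha
    have h0 : (E * X) a b = X a b := by rw [hX2]
    rw [Matrix.mul_apply] at h0
    simp only [hEform, sub_mul, ite_mul, one_mul, zero_mul, Finset.sum_sub_distrib,
      Finset.sum_ite_eq, Finset.mem_univ, if_true] at h0
    linarith
  -- X has zero row sums
  have hu : ∀ a, (∑ b, X a b) = ∑ k, T a k * ∑ b, X k b := by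
    intro a
    have h1 : ∀ b, X a b - ∑ k, T a k * X k b = ((1 - T) * X) a b := by
      intro b
      rw [Matrix.mul_apply]
      simp only [Matrix.sub_apply, Matrix.one_apply, sub_mul, ite_mul, one_mul, zero_mul,
        Finset.sum_sub_distrib, Finset.sum_ite_eq, Finset.mem_univ, if_true]
    have h2 : ∑ b, ((1 - T) * X) a b = 0 := by
      rw [hX3]
      simp only [hEform, Finset.sum_sub_distrib, Finset.sum_ite_eq, Finset.mem_univ,
        if_true, hpi1, sub_self]
    have h3 : ∑ b, (X a b - ∑ k, T a k * X k b) = 0 := by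
      rw [Finset.sum_congr rfl fun b _ => h1 b]; exact h2
    rw [Finset.sum_sub_distrib] at h3
    have h4 : ∑ b, ∑ k, T a k * X k b = ∑ k, T a k * ∑ b, X k b := by
      rw [Finset.sum_comm]
      exact Finset.sum_congr rfl fun k _ => (Finset.mul_sum _ _ _).symm
    linarith
  have hXrow : ∀ a, ∑ b, X a b = 0 := by
    intro a
    have hc := fun i => maxp T hT0 hT1 hirr (fun x => ∑ b, X x b) hu i a
    have h5 : ∑ i, pi i * ∑ b, X i b = ∑ b, X a b := by
      calc ∑ i, pi i * ∑ b, X i b = ∑ i, pi i * ∑ b, X a b :=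
            Finset.sum_congr rfl fun i _ => by rw [hc i]
        _ = (∑ i, pi i) * ∑ b, X a b := (Finset.sum_mul _ _ _).symm
        _ = _ := by rw [hpi1, one_mul]
    have h6 : ∑ i, pi i * ∑ b, X i b = 0 := by
      simp only [Finset.mul_sum]
      rw [Finset.sum_comm]
      exact Finset.sum_eq_zero fun b _ => hpiX b
    linarith
  -- first-step equations in full-sum form
  have eq1 : ∀ i j, M i j - ∑ k, T i k * M k j = 1 - T i j * M j j := by
    intro i j
    have h := hM i j
    rw [show Finset.univ.filter (fun k => k ≠ j) = Finset.univ.erase j from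
      Finset.filter_ne' _ _, Finset.sum_erase_eq_sub (Finset.mem_univ j)] at h
    linarith
  have hdiag : ∀ j, pi j * M j j = 1 := by
    intro j
    have h0 : ∑ i, pi i * (M i j - ∑ k, T i k * M k j) = ∑ i, pi i * (1 - T i j * M j j) :=
      Finset.sum_congr rfl fun i _ => by rw [eq1 i j]
    have hL : ∑ i, pi i * (M i j - ∑ k, T i k * M k j) = 0 := by
      simp only [mul_sub, Finset.sum_sub_distrib]
      have h : ∑ i, pi i * ∑ k, T i k * M k j = ∑ k, pi k * M k j := by
        simp only [Finset.mul_sum]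
        rw [Finset.sum_comm]
        refine Finset.sum_congr rfl fun k _ => ?_
        calc ∑ i, pi i * (T i k * M k j) = (∑ i, pi i * T i k) * M k j := by
              rw [Finset.sum_mul]; exact Finset.sum_congr rfl fun i _ => by ring
          _ = pi k * M k j := by rw [hpiT k]
      rw [h, sub_self]
    have hR : ∑ i, pi i * (1 - T i j * M j j) = 1 - pi j * M j j := by
      simp only [mul_sub, mul_one, Finset.sum_sub_distrib, hpi1]
      congr 1
      calc ∑ i, pi i * (T i j * M j j) = (∑ i, pi i * T i j) * M j j := by
            rw [Finset.sum_mul]; exact Finset.sum_congr rfl fun i _ => by ring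
        _ = pi j * M j j := by rw [hpiT j]
    linarith
  have hpine : ∀ j, pi j ≠ 0 := by
    intro j h
    have := hdiag j
    rw [h, zero_mul] at this
    exact zero_ne_one this
  have hMjj : ∀ j, M j j = 1 / pi j := by
    intro j
    rw [eq_div_iff (hpine j), mul_comm]
    exact hdiag j
  have hXT : ∀ a b, ∑ i, X a i * T i b = X a b - ((if a = b then (1:ℝ) else 0) - pi b) := by
    intro a b
    have h := hEform a b
    rw [hEdef, Matrix.mul_apply] at h
    simp only [Matrix.sub_apply, Matrix.one_apply, mul_sub, mul_ite, mul_one, mul_zero,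
      Finset.sum_sub_distrib, Finset.sum_ite_eq', Finset.mem_univ, if_true] at h
    linarith
  have eq2 : ∀ j a, M a j - ∑ k, pi k * M k j
      = ((if a = j then (1:ℝ) else 0) - X a j - pi j) * M j j := by
    intro j a
    have h0 : ∑ i, X a i * (M i j - ∑ k, T i k * M k j) = ∑ i, X a i * (1 - T i j * M j j) :=
      Finset.sum_congr rfl fun i _ => by rw [eq1 i j]
    have hLHS : ∑ i, X a i * (M i j - ∑ k, T i k * M k j) = M a j - ∑ k, pi k * M k j := by
      simp only [mul_sub, Finset.sum_sub_distrib]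
      have hswap : ∑ i, X a i * ∑ k, T i k * M k j = ∑ k, (∑ i, X a i * T i k) * M k j := by
        simp only [Finset.mul_sum]
        rw [Finset.sum_comm]
        exact Finset.sum_congr rfl fun k _ => by
          rw [Finset.sum_mul]; exact Finset.sum_congr rfl fun i _ => by ring
      rw [hswap]
      simp only [hXT, sub_mul, ite_mul, one_mul, zero_mul, Finset.sum_sub_distrib,
        Finset.sum_ite_eq, Finset.mem_univ, if_true]
      ring
    have hRHS : ∑ i, X a i * (1 - T i j * M j j)
        = ((if a = j then (1:ℝ) else 0) - X a j - pi j) * M j j := by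
      simp only [mul_sub, mul_one, Finset.sum_sub_distrib, hXrow a]
      have h : ∑ i, X a i * (T i j * M j j) = (∑ i, X a i * T i j) * M j j := by
        rw [Finset.sum_mul]; exact Finset.sum_congr rfl fun i _ => by ring
      rw [h, hXT a j]
      ring
    linarith [hLHS, h0, hRHS]
  refine ⟨fun i j hij => ?_, fun j => hMjj j⟩
  have e1 := eq2 j i
  have e2 := eq2 j j
  rw [if_neg hij] at e1
  rw [if_pos rfl] at e2
  have h : M i j = (X j j - X i j) * M j j := by linear_combination e1 - e2
  rw [h, hMjj j, mul_one_div]
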